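/- Every P_M-maximizing set is an interval of consecutive integers contained in [x_min, x_max]. -/
import Mathlib


def hyperPMF (M n N x : ℕ) : ℚ :=
  if x ≤ n then (M.choose x * (N - M).choose (n - x) : ℚ) / (N.choose n) else 0

/-- The (unnormalized) hypergeometric weight. -/
def hypW (M n N x : ℕ) : ℕ := M.choose x * (N - M).choose (n - x)

lemma hypW_pos {M n N x : ℕ} (h1 : x ≤ M) (h2 : n - x ≤ N - M) : 0 < hypW M n N x :=
  Nat.mul_pos (Nat.choose_pos h1) (Nat.choose_pos h2)

lemma hypW_pos_elim {M n N x : ℕ} (h : 0 < hypW M n N x) : x ≤ M ∧ n - x ≤ N - M := by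
  constructor
  · by_contra hc
    push_neg at hc
    simp [hypW, Nat.choose_eq_zero_of_lt hc] at h
  · by_contra hc
    push_neg at hc
    simp [hypW, Nat.choose_eq_zero_of_lt hc] at h

lemma hypW_identity (M n N j : ℕ) (hj : j < n) :
    hypW M n N j * ((M - j) * (n - j)) =
    hypW M n N (j + 1) * ((j + 1) * ((N - M) - (n - (j + 1)))) := by
  have h1 : M.choose (j + 1) * (j + 1) = M.choose j * (M - j) := Nat.choose_succ_right_eq M j
  have hnj : n - j = (n - (j + 1)) + 1 := by omega
  have h2 : (N - M).choose ((n - (j + 1)) + 1) * ((n - (j + 1)) + 1) =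
      (N - M).choose (n - (j + 1)) * ((N - M) - (n - (j + 1))) := Nat.choose_succ_right_eq _ _
  unfold hypW
  rw [hnj]
  calc M.choose j * (N - M).choose ((n - (j + 1)) + 1) * ((M - j) * ((n - (j + 1)) + 1))
      = (M.choose j * (M - j)) * ((N - M).choose ((n - (j + 1)) + 1) * ((n - (j + 1)) + 1)) := by
        ring
    _ = (M.choose (j + 1) * (j + 1)) * ((N - M).choose (n - (j + 1)) * ((N - M) - (n - (j + 1)))) := by
        rw [← h1, h2]
    _ = M.choose (j + 1) * (N - M).choose (n - (j + 1)) * ((j + 1) * ((N - M) - (n - (j + 1)))) := by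
        ring

/-- once a step fails to increase, all later steps strictly decrease -/
lemma hypW_descend (M n N : ℕ) (hMN : M ≤ N) {j j' : ℕ}
    (hlo : M + n ≤ N + j) (hjj' : j < j') (hM : j' < M) (hn : j' < n)
    (hw : hypW M n N (j + 1) ≤ hypW M n N j) :
    hypW M n N (j' + 1) < hypW M n N j' := by
  have hjn : j < n := by omega
  have id1 := hypW_identity M n N j hjn
  have id2 := hypW_identity M n N j' hn
  have hwj : 0 < hypW M n N j := hypW_pos (by omega) (by omega)
  have hwj' : 0 < hypW M n N j' := hypW_pos (by omega) (by omega)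
  have step1 : hypW M n N j * ((M - j) * (n - j)) ≤
      hypW M n N j * ((j + 1) * ((N - M) - (n - (j + 1)))) := by
    rw [id1]; exact Nat.mul_le_mul hw le_rfl
  have hPQ : (M - j) * (n - j) ≤ (j + 1) * ((N - M) - (n - (j + 1))) :=
    Nat.le_of_mul_le_mul_left step1 hwj
  have hP' : (M - j') * (n - j') ≤ (M - j) * (n - j) := Nat.mul_le_mul (by omega) (by omega)
  have hQpos : 0 < (N - M) - (n - (j' + 1)) := by omega
  have hQ : (j + 1) * ((N - M) - (n - (j + 1))) < (j' + 1) * ((N - M) - (n - (j' + 1))) :=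
    calc (j + 1) * ((N - M) - (n - (j + 1))) ≤ (j + 1) * ((N - M) - (n - (j' + 1))) :=
          Nat.mul_le_mul le_rfl (by omega)
      _ < (j' + 1) * ((N - M) - (n - (j' + 1))) :=
          mul_lt_mul_of_pos_right (by omega) hQpos
  have key : hypW M n N (j' + 1) * ((j' + 1) * ((N - M) - (n - (j' + 1)))) <
      hypW M n N j' * ((j' + 1) * ((N - M) - (n - (j' + 1)))) := by
    rw [← id2]
    calc hypW M n N j' * ((M - j') * (n - j'))
        ≤ hypW M n N j' * ((M - j) * (n - j)) := Nat.mul_le_mul le_rfl hP'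
      _ ≤ hypW M n N j' * ((j + 1) * ((N - M) - (n - (j + 1)))) := Nat.mul_le_mul le_rfl hPQ
      _ < hypW M n N j' * ((j' + 1) * ((N - M) - (n - (j' + 1)))) :=
          mul_lt_mul_of_pos_left hQ hwj'
  exact lt_of_mul_lt_mul_right key (Nat.zero_le _)

lemma chain_lt (f : ℕ → ℕ) : ∀ b {a}, a < b →
    (∀ j, a ≤ j → j < b → f j < f (j + 1)) → f a < f b := by
  intro b
  induction b with
  | zero => intro a h; omega
  | succ b ih =>
    intro a hab h
    rcases Nat.lt_or_ge a b with h' | h'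
    · exact lt_trans (ih h' (fun j hj1 hj2 => h j hj1 (by omega))) (h b (by omega) (by omega))
    · have : a = b := by omega
      subst this; exact h a le_rfl (by omega)

lemma chain_gt (f : ℕ → ℕ) : ∀ b {a}, a < b →
    (∀ j, a ≤ j → j < b → f (j + 1) < f j) → f b < f a := by
  intro b
  induction b with
  | zero => intro a h; omega
  | succ b ih =>
    intro a hab h
    rcases Nat.lt_or_ge a b with h' | h'
    · exact lt_trans (h b (by omega) (by omega)) (ih h' (fun j hj1 hj2 => h j hj1 (by omega)))
    · have : a = b := by omega
      subst this; exact h a le_rfl (by omega)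

/-- strict quasiconcavity of the hypergeometric weights -/
lemma hypW_middle (M n N : ℕ) (hMN : M ≤ N) {a c b : ℕ} (hac : a < c) (hcb : c < b)
    (hwa : 0 < hypW M n N a) (hwb : 0 < hypW M n N b) (hbn : b ≤ n) :
    hypW M n N a < hypW M n N c ∨ hypW M n N b < hypW M n N c := by
  obtain ⟨haM, haNM⟩ := hypW_pos_elim hwa
  obtain ⟨hbM, _⟩ := hypW_pos_elim hwb
  rcases Nat.lt_or_ge (hypW M n N a) (hypW M n N c) with h1 | h1
  · exact Or.inl h1
  · right
    have hdes : ∃ j, a ≤ j ∧ j < c ∧ hypW M n N (j + 1) ≤ hypW M n N j := by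
      by_contra hcon
      push_neg at hcon
      exact absurd (chain_lt (hypW M n N) c hac hcon) (by omega)
    obtain ⟨j, hj1, hj2, hj3⟩ := hdes
    refine chain_gt (hypW M n N) b hcb (fun j' hj'1 hj'2 => ?_)
    exact hypW_descend M n N hMN (by omega) (by omega) (by omega) (by omega) hj3

lemma hyperPMF_pos_elim {M n N x : ℕ} (hnN : n ≤ N) (hx : 0 < hyperPMF M n N x) :
    x ≤ n ∧ 0 < hypW M n N x := by
  by_cases hxn : x ≤ n
  · refine ⟨hxn, ?_⟩
    by_contra hc
    push_neg at hc
    have hz : hypW M n N x = 0 := by omega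
    have : (M.choose x * (N - M).choose (n - x) : ℚ) = ((hypW M n N x : ℕ) : ℚ) := by
      push_cast [hypW]; ring
    rw [hyperPMF, if_pos hxn, this, hz] at hx
    norm_num at hx
  · rw [hyperPMF, if_neg hxn] at hx
    norm_num at hx

/-- Every P_M-maximizing set is an interval of consecutive integers contained in
[x_min, x_max]. -/
theorem hyperPMF_maximizing_isInterval (n N M : ℕ) (hn : 0 < n) (hnN : n ≤ N)
    (hMN : M ≤ N) (S : Finset ℕ) (hSn : S ⊆ Finset.range (n + 1))
    (hpos : ∀ x ∈ S, 0 < hyperPMF M n N x)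
    (hmax : ∀ T : Finset ℕ, T ⊆ Finset.range (n + 1) → T.card = S.card →
      (∑ x ∈ T, hyperPMF M n N x) ≤ ∑ x ∈ S, hyperPMF M n N x) :
    (∃ a b : ℕ, S = Finset.Icc a b) ∧ S ⊆ Finset.Icc (M + n - N) (min n M) := by
  -- basic facts about members of S
  have hB : ∀ x ∈ S, x ≤ n ∧ x ≤ M ∧ M + n ≤ N + x ∧ 0 < hypW M n N x := by
    intro x hx
    obtain ⟨hxn, hw⟩ := hyperPMF_pos_elim hnN (hpos x hx)
    obtain ⟨hxM, hxNM⟩ := hypW_pos_elim hw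
    exact ⟨hxn, hxM, by omega, hw⟩
  have hDpos : (0 : ℚ) < (N.choose n : ℚ) := by
    exact_mod_cast Nat.choose_pos hnN
  -- rewrite sums over subsets of range (n+1)
  have hsum : ∀ T : Finset ℕ, T ⊆ Finset.range (n + 1) →
      ∑ x ∈ T, hyperPMF M n N x = (∑ x ∈ T, (hypW M n N x : ℚ)) / (N.choose n : ℚ) := by
    intro T hT
    rw [Finset.sum_div]
    refine Finset.sum_congr rfl (fun x hx => ?_)
    have hxn : x ≤ n := by
      have := hT hx; rw [Finset.mem_range] at this; omega
    rw [hyperPMF, if_pos hxn]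
    push_cast [hypW]
    ring
  have hmaxN : ∀ T : Finset ℕ, T ⊆ Finset.range (n + 1) → T.card = S.card →
      ∑ x ∈ T, hypW M n N x ≤ ∑ x ∈ S, hypW M n N x := by
    intro T hT hcard
    have h := hmax T hT hcard
    rw [hsum T hT, hsum S hSn, div_le_div_iff_of_pos_right hDpos] at h
    exact_mod_cast h
  by_cases hS : S = ∅
  · exact ⟨⟨1, 0, by simp [hS]⟩, by simp [hS]⟩
  · have hne : S.Nonempty := Finset.nonempty_iff_ne_empty.mpr hS
    constructor
    · -- interval part
      refine ⟨S.min' hne, S.max' hne, ?_⟩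
      ext x
      rw [Finset.mem_Icc]
      constructor
      · intro hx
        exact ⟨Finset.min'_le S x hx, Finset.le_max' S x hx⟩
      · rintro ⟨hax, hxb⟩
        by_contra hxS
        have hamem := S.min'_mem hne
        have hbmem := S.max'_mem hne
        have hax' : S.min' hne < x := lt_of_le_of_ne hax (fun h => hxS (h ▸ hamem))
        have hxb' : x < S.max' hne := lt_of_le_of_ne hxb (fun h => hxS (h ▸ hbmem))
        obtain ⟨han, haM, haN, hwa⟩ := hB _ hamem
        obtain ⟨hbn, hbM, hbN, hwb⟩ := hB _ hbmem
        -- swapping argument: replacing e ∈ S by x strictly increases the sum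
        have key : ∀ e ∈ S, hypW M n N e < hypW M n N x → False := by
          intro e hemem hlt
          have hxe : x ∉ S.erase e := fun h => hxS (Finset.mem_of_mem_erase h)
          set T := insert x (S.erase e) with hT
          have hTsub : T ⊆ Finset.range (n + 1) := by
            intro y hy
            rw [hT, Finset.mem_insert] at hy
            rcases hy with rfl | hy
            · rw [Finset.mem_range]; omega
            · exact hSn (Finset.mem_of_mem_erase hy)
          have hTcard : T.card = S.card := by
            rw [hT, Finset.card_insert_of_notMem hxe, Finset.card_erase_of_mem hemem]
            have : 0 < S.card := Finset.card_pos.mpr hne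
            omega
          have hTsum : ∑ y ∈ T, hypW M n N y =
              hypW M n N x + ∑ y ∈ S.erase e, hypW M n N y := by
            rw [hT, Finset.sum_insert hxe]
          have hSsum : ∑ y ∈ S, hypW M n N y =
              hypW M n N e + ∑ y ∈ S.erase e, hypW M n N y :=
            (Finset.add_sum_erase S _ hemem).symm
          have := hmaxN T hTsub hTcard
          rw [hTsum, hSsum] at this
          omega
        rcases hypW_middle M n N hMN hax' hxb' hwa hwb hbn with h | h
        · exact key _ hamem h
        · exact key _ hbmem h
    · -- containment part
      intro x hx
      obtain ⟨hxn, hxM, hxN, _⟩ := hB x hx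
      rw [Finset.mem_Icc]
      exact ⟨by omega, le_min hxn hxM⟩
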